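/- Let (X, P) be a set system on n elements with VC-dimension at most d, and let δ be an integer with 1 ≤ δ ≤ n such that the symmetric difference |Δ(R,S)| ≥ δ for every two distinct sets R, S ∈ P. Then |P| ≤ C·(n/δ)^d for a constant C depending only on d. -/

import Mathlib

open Finset

namespace HausslerPack

variable {α : Type*} [DecidableEq α]

/-- Edge pairs of the one-inclusion (unit-distance) graph of a family. -/
def epairs [Fintype α] (F : Finset (Finset α)) : Finset (Finset α × α) :=
  (F ×ˢ univ).filter (fun p => p.2 ∉ p.1 ∧ insert p.2 p.1 ∈ F)

lemma mem_epairs [Fintype α] {F : Finset (Finset α)} {p : Finset α × α} :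
    p ∈ epairs F ↔ p.1 ∈ F ∧ p.2 ∉ p.1 ∧ insert p.2 p.1 ∈ F := by
  simp [epairs, mem_filter, mem_product]

/-- Haussler's edge-density lemma: the one-inclusion graph of a family of
VC dimension at most `d` has at most `d * |F|` edges. -/
lemma epairs_card_le [Fintype α] :
    ∀ (N : ℕ) (F : Finset (Finset α)) (d : ℕ), F.card ≤ N →
      (∀ Y : Finset α, F.Shatters Y → Y.card ≤ d) → (epairs F).card ≤ d * F.card := by
  intro N
  induction N with
  | zero =>
      intro F d hF _
      have : F = ∅ := card_eq_zero.mp (Nat.le_zero.mp hF)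
      subst this
      simp [epairs]
  | succ N ih =>
      intro F d hF hVC
      rcases eq_empty_or_nonempty (epairs F) with hE | hE
      · simp [hE]
      obtain ⟨⟨S₀, y⟩, hp⟩ := hE
      rw [mem_epairs] at hp
      obtain ⟨hS₀F, hyS₀, hinsS₀⟩ := hp
      simp only at hS₀F hyS₀ hinsS₀
      classical
      set F' : Finset (Finset α) := F.image (·.erase y) with hF'def
      set F'' : Finset (Finset α) := F.filter (fun S => y ∉ S ∧ insert y S ∈ F) with hF''def
      -- basic memberships
      have hS₀F'' : S₀ ∈ F'' := by
        rw [hF''def, mem_filter]; exact ⟨hS₀F, hyS₀, hinsS₀⟩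
      have hF''ne : F''.Nonempty := ⟨S₀, hS₀F''⟩
      have hF'ne : F'.Nonempty := ⟨S₀.erase y, mem_image_of_mem _ hS₀F⟩
      have hynotmem : ∀ T ∈ F'', y ∉ T := fun T hT => ((mem_filter.mp hT).2).1
      -- d ≥ 1 since {y} is shattered
      have hd1 : 1 ≤ d := by
        have : F.Shatters {y} := by
          intro t ht
          rcases Finset.subset_singleton_iff.mp ht with rfl | rfl
          · exact ⟨S₀, hS₀F, by simp [Finset.singleton_inter_of_notMem hyS₀]⟩
          · exact ⟨insert y S₀, hinsS₀,
              Finset.singleton_inter_of_mem (mem_insert_self y S₀)⟩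
        simpa using hVC _ this
      -- fiber counting : F.card = F'.card + F''.card
      have hfiber : ∀ T ∈ F', (F.filter (fun S => S.erase y = T)).card
          = 1 + (if T ∈ F'' then 1 else 0) := by
        intro T hT
        obtain ⟨S₁, hS₁F, hS₁T⟩ := mem_image.mp hT
        have hyT : y ∉ T := by rw [← hS₁T]; exact notMem_erase _ _
        have hsub : ∀ S ∈ F.filter (fun S => S.erase y = T), S = T ∨ S = insert y T := by
          intro S hS
          rw [mem_filter] at hS
          by_cases hyS : y ∈ S
          · right; rw [← hS.2, insert_erase hyS]
          · left; rw [← hS.2, erase_eq_of_notMem hyS]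
        by_cases hTF'' : T ∈ F''
        · rw [if_pos hTF'']
          have hTmem : T ∈ F := (mem_filter.mp hTF'').1
          have hiTmem : insert y T ∈ F := ((mem_filter.mp hTF'').2).2
          have heq : F.filter (fun S => S.erase y = T) = {T, insert y T} := by
            apply Subset.antisymm
            · intro S hS
              rcases hsub S hS with rfl | rfl <;> simp
            · intro S hS
              rcases mem_insert.mp hS with rfl | hS'
              · exact mem_filter.mpr ⟨hTmem, erase_eq_of_notMem hyT⟩
              · rcases mem_singleton.mp hS' with rfl
                exact mem_filter.mpr ⟨hiTmem, erase_insert hyT⟩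
          rw [heq]
          have hne : T ∉ ({insert y T} : Finset (Finset α)) := by
            simp only [mem_singleton]
            intro h; exact hyT (h ▸ mem_insert_self y T)
          rw [card_insert_of_notMem hne, card_singleton]
        · rw [if_neg hTF'']
          apply le_antisymm
          · by_contra hlt
            push_neg at hlt
            obtain ⟨a, ha, b, hb, hab⟩ := one_lt_card.mp
              (by omega : 1 < (F.filter (fun S => S.erase y = T)).card)
            have haT := hsub a ha; have hbT := hsub b hb
            have hTmem : T ∈ F ∧ insert y T ∈ F := by
              rcases haT with rfl | rfl <;> rcases hbT with rfl | rfl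
              · exact absurd rfl hab
              · exact ⟨(mem_filter.mp ha).1, (mem_filter.mp hb).1⟩
              · exact ⟨(mem_filter.mp hb).1, (mem_filter.mp ha).1⟩
              · exact absurd rfl hab
            exact hTF'' (mem_filter.mpr ⟨hTmem.1, hyT, hTmem.2⟩)
          · rw [Nat.succ_le_iff, card_pos]
            exact ⟨S₁, mem_filter.mpr ⟨hS₁F, hS₁T⟩⟩
      have hF''subF' : F'' ⊆ F' := by
        intro T hT
        have hyT := hynotmem T hT
        exact mem_image.mpr ⟨T, (mem_filter.mp hT).1, erase_eq_of_notMem hyT⟩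
      have hcards : F.card = F'.card + F''.card := by
        have h1 : F.card = ∑ T ∈ F', (F.filter (fun S => S.erase y = T)).card :=
          card_eq_sum_card_fiberwise (fun S hS => mem_image_of_mem _ hS)
        have h2 : ∑ T ∈ F', (if T ∈ F'' then (1:ℕ) else 0) = F''.card := by
          rw [sum_ite_mem, inter_eq_right.mpr hF''subF']
          simp
        rw [h1, sum_congr rfl hfiber, sum_add_distrib, sum_const, smul_eq_mul, mul_one, h2]
      -- y-direction edges
      have hyedges : ((epairs F).filter (fun p => p.2 = y)).card = F''.card := by
        apply card_bij (fun p _ => p.1)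
        · rintro ⟨S, x⟩ hp
          rw [mem_filter, mem_epairs] at hp
          obtain ⟨⟨h1, h2, h3⟩, h4⟩ := hp
          simp only at h1 h2 h3 h4
          subst h4
          exact mem_filter.mpr ⟨h1, h2, h3⟩
        · rintro ⟨S, x⟩ hp ⟨S', x'⟩ hp' h
          rw [mem_filter] at hp hp'
          simp only at h
          rw [Prod.ext_iff]
          exact ⟨h, hp.2.trans hp'.2.symm⟩
        · intro T hT
          rw [mem_filter] at hT
          refine ⟨(T, y), ?_, rfl⟩
          rw [mem_filter, mem_epairs]
          exact ⟨⟨hT.1, hT.2.1, hT.2.2⟩, rfl⟩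
      -- non-y edges inject into edges of F' ⊕ edges of F''
      have hD : ((epairs F).filter (fun p => p.2 ≠ y)).card
          ≤ (epairs F').card + (epairs F'').card := by
        rw [← card_disjSum]
        apply card_le_card_of_injOn
          (fun p => if y ∈ p.1 ∧ (p.1.erase y, p.2) ∈ epairs F''
            then Sum.inr (p.1.erase y, p.2) else Sum.inl (p.1.erase y, p.2))
        · rintro ⟨S, x⟩ hp
          rw [mem_coe, mem_filter, mem_epairs] at hp
          obtain ⟨⟨h1, h2, h3⟩, h4⟩ := hp
          simp only at h1 h2 h3 h4
          have hxy : x ≠ y := h4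
          simp only [mem_coe]
          by_cases hc : y ∈ S ∧ (S.erase y, x) ∈ epairs F''
          · rw [if_pos hc]
            exact inr_mem_disjSum.mpr hc.2
          · rw [if_neg hc]
            apply inl_mem_disjSum.mpr
            rw [mem_epairs]
            refine ⟨mem_image_of_mem _ h1, ?_, ?_⟩
            · simp only [mem_erase]; tauto
            · have heq : insert x (S.erase y) = (insert x S).erase y :=
                (erase_insert_of_ne hxy).symm
              rw [heq]
              exact mem_image_of_mem _ h3
        · rintro ⟨S, x⟩ hp ⟨S', x'⟩ hp' heq
          simp only [mem_coe, mem_filter, mem_epairs] at hp hp'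
          obtain ⟨⟨h1, h2, h3⟩, h4⟩ := hp
          obtain ⟨⟨h1', h2', h3'⟩, h4'⟩ := hp'
          simp only at heq
          by_cases hc : y ∈ S ∧ (S.erase y, x) ∈ epairs F'' <;>
            by_cases hc' : y ∈ S' ∧ (S'.erase y, x') ∈ epairs F''
          · rw [if_pos hc, if_pos hc'] at heq
            have hpair := Sum.inr.inj heq
            have hx : x = x' := congrArg Prod.snd hpair
            have hSe : S.erase y = S'.erase y := congrArg Prod.fst hpair
            have : S = S' := by
              rw [← insert_erase hc.1, ← insert_erase hc'.1, hSe]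
            exact Prod.ext this hx
          · rw [if_pos hc, if_neg hc'] at heq; exact absurd heq (by simp)
          · rw [if_neg hc, if_pos hc'] at heq; exact absurd heq (by simp)
          · rw [if_neg hc, if_neg hc'] at heq
            have hpair := Sum.inl.inj heq
            have hx : x = x' := congrArg Prod.snd hpair
            have hSe : S.erase y = S'.erase y := congrArg Prod.fst hpair
            subst hx
            -- key: mixed case impossible
            have key : ∀ (A B : Finset α), A ∈ F → x ∉ A → insert x A ∈ F →
                B ∈ F → x ∉ B → insert x B ∈ F → x ≠ y → y ∈ A → y ∉ B →
                A.erase y = B.erase y → (A.erase y, x) ∈ epairs F'' := by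
              intro A B hA hxA hixA hB hxB hixB hxy hyA hyB hAB
              have hTB : A.erase y = B := by rw [hAB, erase_eq_of_notMem hyB]
              rw [mem_epairs]
              refine ⟨?_, ?_, ?_⟩
              · rw [hTB]
                refine mem_filter.mpr ⟨hB, hyB, ?_⟩
                have : insert y B = A := by rw [← hTB, insert_erase hyA]
                rw [this]; exact hA
              · simp only [mem_erase]; tauto
              · rw [hTB]
                refine mem_filter.mpr ⟨hixB, by simp [hxy.symm, hyB], ?_⟩
                have : insert y (insert x B) = insert x A := by
                  rw [Finset.insert_comm, ← hTB, insert_erase hyA]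
                rw [this]; exact hixA
            by_cases hyS : y ∈ S <;> by_cases hyS' : y ∈ S'
            · have : S = S' := by rw [← insert_erase hyS, ← insert_erase hyS', hSe]
              exact Prod.ext this rfl
            · exact absurd (key S S' h1 h2 h3 h1' h2' h3' h4 hyS hyS' hSe) (by tauto)
            · exact absurd (key S' S h1' h2' h3' h1 h2 h3 h4 hyS' hyS hSe.symm) (by tauto)
            · have : S = S' := by
                rw [← erase_eq_of_notMem hyS, ← erase_eq_of_notMem hyS', hSe]
              exact Prod.ext this rfl
      -- VC dimension transfer to F'
      have hVC' : ∀ Y : Finset α, F'.Shatters Y → Y.card ≤ d := by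
        intro Y hY
        have hyY : y ∉ Y := by
          intro hyY
          obtain ⟨u, hu, huY⟩ := hY (Subset.refl Y)
          obtain ⟨S, _, rfl⟩ := mem_image.mp hu
          have : y ∈ Y ∩ S.erase y := huY.symm ▸ hyY
          exact (notMem_erase y S) (mem_inter.mp this).2
        apply hVC
        intro t ht
        obtain ⟨u, hu, hut⟩ := hY ht
        obtain ⟨S, hS, rfl⟩ := mem_image.mp hu
        refine ⟨S, hS, ?_⟩
        rw [← hut]
        ext z
        simp only [mem_inter, mem_erase]
        constructor
        · rintro ⟨hzY, hzS⟩
          exact ⟨hzY, fun h => hyY (h ▸ hzY), hzS⟩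
        · rintro ⟨hzY, _, hzS⟩; exact ⟨hzY, hzS⟩
      -- VC dimension transfer to F''
      have hVC'' : ∀ Y : Finset α, F''.Shatters Y → Y.card + 1 ≤ d := by
        intro Y hY
        have hyY : y ∉ Y := by
          intro hyY
          obtain ⟨u, hu, huY⟩ := hY (Subset.refl Y)
          have : y ∈ Y ∩ u := huY.symm ▸ hyY
          exact (hynotmem u hu) (mem_inter.mp this).2
        have hsh : F.Shatters (insert y Y) := by
          intro t ht
          have ht' : t.erase y ⊆ Y := by
            have := erase_subset_erase y ht
            rwa [erase_insert hyY] at this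
          obtain ⟨u, hu, hut⟩ := hY ht'
          have huF : u ∈ F := (mem_filter.mp hu).1
          have hyu : y ∉ u := (mem_filter.mp hu).2.1
          have hiu : insert y u ∈ F := (mem_filter.mp hu).2.2
          by_cases hyt : y ∈ t
          · refine ⟨insert y u, hiu, ?_⟩
            have htt : t = insert y (t.erase y) := (insert_erase hyt).symm
            rw [htt, ← hut]
            ext z
            simp only [mem_inter, mem_insert]
            tauto
          · refine ⟨u, huF, ?_⟩
            have htt : t = t.erase y := (erase_eq_of_notMem hyt).symm
            rw [htt, ← hut]
            ext z
            simp only [mem_inter, mem_insert]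
            constructor
            · rintro ⟨(rfl | hzY), hzu⟩
              · exact absurd hzu hyu
              · exact ⟨hzY, hzu⟩
            · rintro ⟨hzY, hzu⟩; exact ⟨Or.inr hzY, hzu⟩
        have := hVC _ hsh
        rwa [card_insert_of_notMem hyY] at this
      -- apply induction hypothesis
      have hF'pos : 1 ≤ F'.card := card_pos.mpr hF'ne
      have hF''pos : 1 ≤ F''.card := card_pos.mpr hF''ne
      have hF'le : F'.card ≤ N := by omega
      have hF''le : F''.card ≤ N := by omega
      have hE' : (epairs F').card ≤ d * F'.card := ih F' d hF'le hVC'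
      have hE'' : (epairs F'').card ≤ (d-1) * F''.card :=
        ih F'' (d-1) hF''le (fun Y h => by have := hVC'' Y h; omega)
      have hsplit : ((epairs F).filter (fun p => p.2 = y)).card
          + ((epairs F).filter (fun p => ¬ p.2 = y)).card = (epairs F).card :=
        card_filter_add_card_filter_not _
      have hdm : (d - 1) * F''.card + F''.card = d * F''.card := by
        have : d - 1 + 1 = d := Nat.succ_pred_eq_of_pos hd1
        calc (d - 1) * F''.card + F''.card = ((d-1) + 1) * F''.card := by ring
        _ = d * F''.card := by rw [this]
      calc (epairs F).card
          = ((epairs F).filter (fun p => p.2 = y)).card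
            + ((epairs F).filter (fun p => ¬ p.2 = y)).card := hsplit.symm
        _ ≤ F''.card + ((epairs F').card + (epairs F'').card) := by
            rw [hyedges]; exact Nat.add_le_add_left hD _
        _ ≤ F''.card + (d * F'.card + (d-1) * F''.card) := by
            exact Nat.add_le_add_left (Nat.add_le_add hE' hE'') _
        _ = d * F'.card + ((d-1) * F''.card + F''.card) := by ring
        _ = d * F'.card + d * F''.card := by rw [hdm]
        _ = d * F.card := by rw [hcards, mul_add]

variable {α : Type*} [DecidableEq α]

/-- The number of sets in `P` whose trace on `B` equals `u`. -/
def W (P : Finset (Finset α)) (B u : Finset α) : ℕ :=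
  (P.filter (fun R => R ∩ B = u)).card

lemma sum_W (P : Finset (Finset α)) (B : Finset α) :
    ∑ u ∈ B.powerset, W P B u = P.card :=
  (card_eq_sum_card_fiberwise (fun R _ => mem_powerset.mpr inter_subset_right)).symm

lemma W_le (P : Finset (Finset α)) (B u : Finset α) : W P B u ≤ P.card :=
  card_filter_le _ _

/-- Sauer–Shelah-type bound for the trace family on `A`. -/
lemma trace_card_le (P : Finset (Finset α)) (d : ℕ) (A : Finset α)
    (hVC : ∀ Y : Finset α, P.Shatters Y → Y.card ≤ d) :
    (P.image (· ∩ A)).card ≤ (d+1) * (A.card + 1)^d := by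
  classical
  set F := P.image (· ∩ A) with hF
  have htrans : ∀ Y : Finset α, F.Shatters Y → Y ⊆ A ∧ P.Shatters Y := by
    intro Y hY
    have hYA : Y ⊆ A := by
      obtain ⟨u, hu, huY⟩ := hY (Subset.refl Y)
      obtain ⟨R, _, rfl⟩ := mem_image.mp hu
      have : Y ⊆ R ∩ A := inter_eq_left.mp huY
      exact this.trans inter_subset_right
    refine ⟨hYA, ?_⟩
    intro t ht
    obtain ⟨u, hu, hut⟩ := hY ht
    obtain ⟨R, hR, rfl⟩ := mem_image.mp hu
    refine ⟨R, hR, ?_⟩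
    rw [← hut]
    ext z
    simp only [mem_inter]
    exact ⟨fun ⟨h1, h2⟩ => ⟨h1, h2, hYA h1⟩, fun ⟨h1, h2, _⟩ => ⟨h1, h2⟩⟩
  have h1 : F.card ≤ F.shatterer.card := card_le_card_shatterer F
  have h2 : F.shatterer ⊆ (range (d+1)).biUnion (fun i => A.powersetCard i) := by
    intro Y hY
    have hsh := mem_shatterer.mp hY
    obtain ⟨hYA, hPY⟩ := htrans Y hsh
    have hYd : Y.card ≤ d := hVC Y hPY
    exact mem_biUnion.mpr ⟨Y.card, mem_range.mpr (by omega),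
      mem_powersetCard.mpr ⟨hYA, rfl⟩⟩
  have h3 : ((range (d+1)).biUnion (fun i => A.powersetCard i)).card
      ≤ ∑ i ∈ range (d+1), (A.powersetCard i).card := card_biUnion_le
  have h4 : ∑ i ∈ range (d+1), (A.powersetCard i).card ≤ (d+1) * (A.card+1)^d := by
    have : ∀ i ∈ range (d+1), (A.powersetCard i).card ≤ (A.card+1)^d := by
      intro i hi
      rw [card_powersetCard]
      calc A.card.choose i ≤ A.card ^ i := Nat.choose_le_pow _ _
        _ ≤ (A.card+1) ^ i := Nat.pow_le_pow_left (Nat.le_succ _) _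
        _ ≤ (A.card+1) ^ d := Nat.pow_le_pow_right (Nat.succ_pos _) (by
            simpa using Nat.lt_succ_iff.mp (mem_range.mp hi))
    calc ∑ i ∈ range (d+1), (A.powersetCard i).card
        ≤ ∑ _i ∈ range (d+1), (A.card+1)^d := sum_le_sum this
      _ = (d+1) * (A.card+1)^d := by rw [sum_const, card_range, smul_eq_mul]
  exact h1.trans ((card_le_card h2).trans (h3.trans h4))

lemma min_eq_card_filter {s a b : ℕ} (ha : a ≤ s) :
    min a b = ((range s).filter (fun k => k < a ∧ k < b)).card := by
  have : (range s).filter (fun k => k < a ∧ k < b) = range (min a b) := by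
    ext k
    simp only [mem_filter, mem_range, lt_min_iff]
    omega
  rw [this, card_range]

/-- Claim II : weighted edge bound for the trace multiplicities on `B`. -/
lemma claimII [Fintype α] (P : Finset (Finset α)) (d : ℕ)
    (hVC : ∀ Y : Finset α, P.Shatters Y → Y.card ≤ d) (B : Finset α) :
    ∑ x ∈ B, ∑ u ∈ (B.erase x).powerset, min (W P B u) (W P B (insert x u))
      ≤ d * P.card := by
  classical
  set s := P.card with hs
  set V : ℕ → Finset (Finset α) := fun k => B.powerset.filter (fun u => k < W P B u)
    with hV
  have step1 : ∑ x ∈ B, ∑ u ∈ (B.erase x).powerset,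
      min (W P B u) (W P B (insert x u))
      = ∑ k ∈ range s, ∑ x ∈ B, ∑ u ∈ (B.erase x).powerset,
          (if k < W P B u ∧ k < W P B (insert x u) then 1 else 0) := by
    rw [sum_comm]
    apply sum_congr rfl
    intro x _
    rw [sum_comm]
    apply sum_congr rfl
    intro u _
    rw [min_eq_card_filter (W_le P B u), card_filter]
  have step2 : ∀ k, ∑ x ∈ B, ∑ u ∈ (B.erase x).powerset,
      (if k < W P B u ∧ k < W P B (insert x u) then 1 else 0) = (epairs (V k)).card := by
    intro k
    rw [sum_sigma']
    rw [← card_filter (fun p => k < W P B p.2 ∧ k < W P B (insert p.1 p.2))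
      (B.sigma fun x => (B.erase x).powerset)]
    apply card_nbij (i := fun p => (p.2, p.1))
    · rintro ⟨x, u⟩ hp
      rw [mem_coe, mem_filter, mem_sigma] at hp
      obtain ⟨⟨hxB, hu⟩, hWu, hWxu⟩ := hp
      rw [mem_powerset] at hu
      have huB : u ⊆ B := hu.trans (erase_subset _ _)
      have hxu : x ∉ u := fun h => (notMem_erase x B) (hu h)
      rw [mem_coe, mem_epairs]
      refine ⟨mem_filter.mpr ⟨mem_powerset.mpr huB, hWu⟩, hxu, ?_⟩
      exact mem_filter.mpr ⟨mem_powerset.mpr (insert_subset hxB huB), hWxu⟩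
    · rintro ⟨x, u⟩ _ ⟨x', u'⟩ _ h
      simp only [Prod.mk.injEq] at h
      obtain ⟨h1, h2⟩ := h
      subst h1; subst h2; rfl
    · rintro ⟨u, x⟩ hp
      rw [mem_coe, mem_epairs] at hp
      obtain ⟨hu, hxu, hixu⟩ := hp
      rw [mem_filter, mem_powerset] at hu hixu
      have hxB : x ∈ B := hixu.1 (mem_insert_self x u)
      refine ⟨⟨x, u⟩, ?_, rfl⟩
      rw [mem_coe, mem_filter, mem_sigma, mem_powerset]
      exact ⟨⟨hxB, subset_erase.mpr ⟨hu.1, hxu⟩⟩, hu.2, hixu.2⟩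
  have hVk : ∀ k, ∀ Y : Finset α, (V k).Shatters Y → Y.card ≤ d := by
    intro k Y hY
    have hYB : Y ⊆ B := by
      obtain ⟨u, hu, huY⟩ := hY (Subset.refl Y)
      have : Y ⊆ u := inter_eq_left.mp huY
      exact this.trans (mem_powerset.mp (mem_filter.mp hu).1)
    apply hVC
    intro t ht
    obtain ⟨u, hu, hut⟩ := hY ht
    rw [mem_filter] at hu
    have : 0 < W P B u := lt_of_le_of_lt (Nat.zero_le k) hu.2
    rw [W, card_pos] at this
    obtain ⟨R, hR⟩ := this
    rw [mem_filter] at hR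
    refine ⟨R, hR.1, ?_⟩
    rw [← hut, ← hR.2]
    ext z
    simp only [mem_inter]
    exact ⟨fun ⟨h1, h2⟩ => ⟨h1, h2, hYB h1⟩, fun ⟨h1, h2, _⟩ => ⟨h1, h2⟩⟩
  have step3 : ∀ k, (epairs (V k)).card ≤ d * (V k).card := fun k =>
    epairs_card_le (V k).card (V k) d le_rfl (hVk k)
  have step4 : ∑ k ∈ range s, (V k).card = s := by
    have h1 : ∀ k, (V k).card = ∑ u ∈ B.powerset, (if k < W P B u then 1 else 0) := by
      intro k
      rw [hV]
      exact card_filter _ _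
    have h2 : ∑ k ∈ range s, ∑ u ∈ B.powerset, (if k < W P B u then 1 else 0)
        = ∑ u ∈ B.powerset, ∑ k ∈ range s, (if k < W P B u then 1 else 0) := sum_comm
    have h3 : ∀ u ∈ B.powerset, ∑ k ∈ range s, (if k < W P B u then 1 else 0)
        = W P B u := by
      intro u _
      rw [← card_filter]
      have : (range s).filter (fun k => k < W P B u) = range (W P B u) := by
        ext k
        simp only [mem_filter, mem_range]
        have := W_le P B u
        omega
      rw [this, card_range]
    calc ∑ k ∈ range s, (V k).card
        = ∑ k ∈ range s, ∑ u ∈ B.powerset, (if k < W P B u then 1 else 0) :=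
          sum_congr rfl (fun k _ => h1 k)
      _ = ∑ u ∈ B.powerset, ∑ k ∈ range s, (if k < W P B u then 1 else 0) := h2
      _ = ∑ u ∈ B.powerset, W P B u := sum_congr rfl h3
      _ = s := sum_W P B
  calc ∑ x ∈ B, ∑ u ∈ (B.erase x).powerset, min (W P B u) (W P B (insert x u))
      = ∑ k ∈ range s, (epairs (V k)).card := by rw [step1]; exact sum_congr rfl (fun k _ => step2 k)
    _ ≤ ∑ k ∈ range s, d * (V k).card := sum_le_sum (fun k _ => step3 k)
    _ = d * ∑ k ∈ range s, (V k).card := by rw [mul_sum]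
    _ = d * s := by rw [step4]

lemma ite_mul_ite (p q : Prop) [Decidable p] [Decidable q] :
    (if p then (1:ℕ) else 0) * (if q then (1:ℕ) else 0) = if p ∧ q then 1 else 0 := by
  by_cases hp : p <;> by_cases hq : q <;> simp [hp, hq]

lemma card_symmDiff' (S R : Finset α) :
    (symmDiff S R).card = (S \ R).card + (R \ S).card := by
  rw [symmDiff_def, sup_eq_union]
  exact card_union_of_disjoint disjoint_sdiff_sdiff

/-- Claim I : the separation lower bound, for a fixed set `A`. -/
lemma claimI [Fintype α] (P : Finset (Finset α)) (δ : ℕ)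
    (hsep : ∀ R ∈ P, ∀ S ∈ P, R ≠ S → δ ≤ (symmDiff R S).card) (A : Finset α) :
    δ * P.card ≤ δ * (P.image (· ∩ A)).card
      + 2 * ∑ x ∈ Aᶜ, ∑ t ∈ A.powerset,
          min (W P (insert x A) t) (W P (insert x A) (insert x t)) := by
  classical
  set I := P.image (· ∩ A) with hI
  -- fiber decomposition
  have hfib : P.card = ∑ t ∈ I, (P.filter (fun R => R ∩ A = t)).card :=
    card_eq_sum_card_fiberwise (fun R hR => mem_image_of_mem _ hR)
  -- abbreviations
  set F : Finset α → Finset (Finset α) := fun t => P.filter (fun R => R ∩ A = t) with hF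
  set a : Finset α → α → ℕ := fun t x => ((F t).filter (fun R => x ∉ R)).card with ha
  set b : Finset α → α → ℕ := fun t x => ((F t).filter (fun R => x ∈ R)).card with hb
  -- the per-trace inequality
  have key : ∀ t ∈ I, δ * (F t).card ≤ δ + 2 * ∑ x ∈ Aᶜ, min (a t x) (b t x) := by
    intro t htI
    set w := (F t).card with hw
    have hw1 : 1 ≤ w := by
      obtain ⟨R, hR, hRt⟩ := mem_image.mp htI
      exact card_pos.mpr ⟨R, mem_filter.mpr ⟨hR, hRt⟩⟩
    have hab : ∀ x, a t x + b t x = w := by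
      intro x
      have := card_filter_add_card_filter_not (s := F t)
        (p := fun R => x ∉ R)
      rw [ha, hb]
      simp only [not_not] at this
      convert this using 2
    have hminw : ∀ x : α, a t x * b t x ≤ w * min (a t x) (b t x) := by
      intro x
      rcases le_total (a t x) (b t x) with h | h
      · rw [min_eq_left h, ← hab x]
        calc a t x * b t x ≤ a t x * a t x + a t x * b t x := Nat.le_add_left _ _
          _ = (a t x + b t x) * a t x := by ring
      · rw [min_eq_right h, ← hab x]
        calc a t x * b t x ≤ a t x * b t x + b t x * b t x := Nat.le_add_right _ _
          _ = (a t x + b t x) * b t x := by ring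
    -- ∑_{x ∉ A} a*b  =  ∑_{R,S ∈ F t} |S \ R|
    have habsum : ∑ x ∈ Aᶜ, a t x * b t x
        = ∑ R ∈ F t, ∑ S ∈ F t, (S \ R).card := by
      have hab2 : ∀ x, a t x * b t x
          = ∑ R ∈ F t, ∑ S ∈ F t, (if x ∉ R ∧ x ∈ S then 1 else 0) := by
        intro x
        rw [ha, hb]
        simp only
        rw [card_filter, card_filter, sum_mul_sum]
        exact sum_congr rfl (fun R _ => sum_congr rfl (fun S _ => ite_mul_ite _ _))
      calc ∑ x ∈ Aᶜ, a t x * b t x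
          = ∑ x ∈ Aᶜ, ∑ R ∈ F t, ∑ S ∈ F t, (if x ∉ R ∧ x ∈ S then 1 else 0) :=
            sum_congr rfl (fun x _ => hab2 x)
        _ = ∑ R ∈ F t, ∑ x ∈ Aᶜ, ∑ S ∈ F t, (if x ∉ R ∧ x ∈ S then 1 else 0) := sum_comm
        _ = ∑ R ∈ F t, ∑ S ∈ F t, ∑ x ∈ Aᶜ, (if x ∉ R ∧ x ∈ S then 1 else 0) :=
            sum_congr rfl (fun R _ => sum_comm)
        _ = ∑ R ∈ F t, ∑ S ∈ F t, (S \ R).card := by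
            apply sum_congr rfl; intro R hR
            apply sum_congr rfl; intro S hS
            rw [← card_filter]
            congr 1
            ext z
            simp only [mem_filter, mem_compl, mem_sdiff]
            constructor
            · rintro ⟨_, hzR, hzS⟩; exact ⟨hzS, hzR⟩
            · rintro ⟨hzS, hzR⟩
              refine ⟨?_, hzR, hzS⟩
              intro hzA
              have h1 : S ∩ A = t := (mem_filter.mp hS).2
              have h2 : R ∩ A = t := (mem_filter.mp hR).2
              exact hzR (mem_of_mem_inter_left (h2 ▸ (h1 ▸ mem_inter.mpr ⟨hzS, hzA⟩)))
    -- separation bound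
    have hsepsum : w * ((w - 1) * δ) ≤ ∑ R ∈ F t, ∑ S ∈ F t, ((S \ R).card + (R \ S).card) := by
      have hinner : ∀ R ∈ F t, (w - 1) * δ ≤ ∑ S ∈ F t, ((S \ R).card + (R \ S).card) := by
        intro R hR
        have hRP : R ∈ P := (mem_filter.mp hR).1
        calc (w - 1) * δ = ∑ _S ∈ (F t).erase R, δ := by
              rw [sum_const, card_erase_of_mem hR, smul_eq_mul]
          _ ≤ ∑ S ∈ (F t).erase R, ((S \ R).card + (R \ S).card) := by
              apply sum_le_sum
              intro S hS
              have hSR : S ≠ R := (mem_erase.mp hS).1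
              have hSP : S ∈ P := (mem_filter.mp (mem_erase.mp hS).2).1
              have := hsep S hSP R hRP hSR
              rwa [card_symmDiff'] at this
          _ ≤ ∑ S ∈ F t, ((S \ R).card + (R \ S).card) :=
              sum_le_sum_of_subset (erase_subset _ _)
      calc w * ((w - 1) * δ) = ∑ _R ∈ F t, (w - 1) * δ := by rw [sum_const, smul_eq_mul, hw]
        _ ≤ _ := sum_le_sum hinner
    -- symmetrize
    have hsym : ∑ R ∈ F t, ∑ S ∈ F t, ((S \ R).card + (R \ S).card)
        = 2 * ∑ R ∈ F t, ∑ S ∈ F t, (S \ R).card := by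
      rw [two_mul]
      conv_lhs => rw [show (∑ R ∈ F t, ∑ S ∈ F t, ((S \ R).card + (R \ S).card))
        = (∑ R ∈ F t, ∑ S ∈ F t, (S \ R).card) + ∑ R ∈ F t, ∑ S ∈ F t, (R \ S).card by
          rw [← sum_add_distrib]; exact sum_congr rfl (fun R _ => by rw [← sum_add_distrib])]
      congr 1
      rw [sum_comm]
    -- combine
    have hchain : w * ((w - 1) * δ) ≤ w * (2 * ∑ x ∈ Aᶜ, min (a t x) (b t x)) := by
      calc w * ((w - 1) * δ)
          ≤ ∑ R ∈ F t, ∑ S ∈ F t, ((S \ R).card + (R \ S).card) := hsepsum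
        _ = 2 * ∑ x ∈ Aᶜ, a t x * b t x := by rw [hsym, habsum]
        _ ≤ 2 * ∑ x ∈ Aᶜ, w * min (a t x) (b t x) :=
            Nat.mul_le_mul_left _ (sum_le_sum (fun x _ => hminw x))
        _ = w * (2 * ∑ x ∈ Aᶜ, min (a t x) (b t x)) := by rw [← mul_sum]; ring
    have h2 : (w - 1) * δ ≤ 2 * ∑ x ∈ Aᶜ, min (a t x) (b t x) :=
      Nat.le_of_mul_le_mul_left hchain (by omega)
    calc δ * w = δ + (w - 1) * δ := by
          have : w - 1 + 1 = w := by omega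
          calc δ * w = (w - 1 + 1) * δ := by rw [this, mul_comm]
            _ = δ + (w-1) * δ := by ring
      _ ≤ δ + 2 * ∑ x ∈ Aᶜ, min (a t x) (b t x) := Nat.add_le_add_left h2 _
  -- bridge : a, b are the W-multiplicities on insert x A
  have bridge : ∀ t ∈ A.powerset, ∀ x ∈ Aᶜ,
      min (a t x) (b t x)
        = min (W P (insert x A) t) (W P (insert x A) (insert x t)) := by
    intro t ht x hx
    rw [mem_powerset] at ht
    rw [mem_compl] at hx
    have hxt : x ∉ t := fun h => hx (ht h)
    have hiff1 : ∀ R ∈ P, (R ∩ insert x A = t ↔ R ∩ A = t ∧ x ∉ R) := by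
      intro R _
      constructor
      · intro h
        have hxR : x ∉ R := fun hxR =>
          hxt (h ▸ mem_inter.mpr ⟨hxR, mem_insert_self x A⟩)
        refine ⟨?_, hxR⟩
        have heq : R ∩ A = R ∩ insert x A := by
          ext z
          simp only [mem_inter, mem_insert]
          constructor
          · rintro ⟨h1, h2⟩; exact ⟨h1, Or.inr h2⟩
          · rintro ⟨h1, rfl | h2⟩
            · exact absurd h1 hxR
            · exact ⟨h1, h2⟩
        rw [heq, h]
      · rintro ⟨h1, h2⟩
        ext z
        simp only [mem_inter, mem_insert]
        constructor
        · rintro ⟨hzR, rfl | hzA⟩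
          · exact absurd hzR h2
          · rw [← h1]; exact mem_inter.mpr ⟨hzR, hzA⟩
        · intro hzt
          have hz : z ∈ R ∩ A := by rw [h1]; exact hzt
          exact ⟨(mem_inter.mp hz).1, Or.inr (mem_inter.mp hz).2⟩
    have hiff2 : ∀ R ∈ P, (R ∩ insert x A = insert x t ↔ R ∩ A = t ∧ x ∈ R) := by
      intro R _
      constructor
      · intro h
        have hxR : x ∈ R := by
          have : x ∈ R ∩ insert x A := by rw [h]; exact mem_insert_self x t
          exact (mem_inter.mp this).1
        refine ⟨?_, hxR⟩
        ext z
        simp only [mem_inter]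
        constructor
        · rintro ⟨hzR, hzA⟩
          have : z ∈ R ∩ insert x A := mem_inter.mpr ⟨hzR, mem_insert_of_mem hzA⟩
          rw [h] at this
          rcases mem_insert.mp this with rfl | hzt
          · exact absurd hzA hx
          · exact hzt
        · intro hzt
          have : z ∈ R ∩ insert x A := by rw [h]; exact mem_insert_of_mem hzt
          exact ⟨(mem_inter.mp this).1, ht hzt⟩
      · rintro ⟨h1, h2⟩
        ext z
        simp only [mem_inter, mem_insert]
        constructor
        · rintro ⟨hzR, rfl | hzA⟩
          · exact Or.inl rfl
          · right
            rw [← h1]; exact mem_inter.mpr ⟨hzR, hzA⟩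
        · rintro (rfl | hzt)
          · exact ⟨h2, Or.inl rfl⟩
          · have hz : z ∈ R ∩ A := by rw [h1]; exact hzt
            exact ⟨(mem_inter.mp hz).1, Or.inr (mem_inter.mp hz).2⟩
    have e1 : W P (insert x A) t = a t x := by
      rw [W, ha]
      simp only
      rw [hF]
      simp only
      rw [filter_filter]
      apply congrArg
      apply filter_congr
      intro R hR
      simpa using hiff1 R hR
    have e2 : W P (insert x A) (insert x t) = b t x := by
      rw [W, hb]
      simp only
      rw [hF]
      simp only
      rw [filter_filter]
      apply congrArg
      apply filter_congr
      intro R hR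
      simpa using hiff2 R hR
    rw [e1, e2]
  -- final assembly
  have hIsub : I ⊆ A.powerset := by
    intro t htI
    obtain ⟨R, _, rfl⟩ := mem_image.mp htI
    exact mem_powerset.mpr inter_subset_right
  calc δ * P.card = ∑ t ∈ I, δ * (F t).card := by rw [hfib, mul_sum]
    _ ≤ ∑ t ∈ I, (δ + 2 * ∑ x ∈ Aᶜ, min (a t x) (b t x)) := sum_le_sum key
    _ = δ * I.card + 2 * ∑ t ∈ I, ∑ x ∈ Aᶜ, min (a t x) (b t x) := by
        rw [sum_add_distrib, sum_const, smul_eq_mul, mul_comm, mul_sum]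
    _ ≤ δ * I.card + 2 * ∑ t ∈ A.powerset, ∑ x ∈ Aᶜ, min (a t x) (b t x) := by
        apply Nat.add_le_add_left
        apply Nat.mul_le_mul_left
        exact sum_le_sum_of_subset hIsub
    _ = δ * I.card + 2 * ∑ x ∈ Aᶜ, ∑ t ∈ A.powerset,
          min (W P (insert x A) t) (W P (insert x A) (insert x t)) := by
        congr 1
        apply congrArg
        rw [sum_comm]
        apply sum_congr rfl
        intro x hx
        exact sum_congr rfl (fun t htp => bridge t htp x hx)

/-- Claim III : double counting pairs `(A, x)` with `|A| = k`, `x ∉ A`. -/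
lemma claimIII [Fintype α] (f : Finset α → α → ℕ) (k : ℕ) :
    ∑ A ∈ powersetCard k (univ : Finset α), ∑ x ∈ Aᶜ, f A x
      = ∑ B ∈ powersetCard (k+1) (univ : Finset α), ∑ x ∈ B, f (B.erase x) x := by
  classical
  rw [sum_sigma', sum_sigma']
  apply sum_nbij' (i := fun p => (⟨insert p.2 p.1, p.2⟩ : (_ : Finset α) × α))
    (j := fun p => (⟨p.1.erase p.2, p.2⟩ : (_ : Finset α) × α))
  · rintro ⟨A, x⟩ hp
    rw [mem_sigma, mem_powersetCard_univ] at hp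
    obtain ⟨hA, hx⟩ := hp
    rw [mem_compl] at hx
    rw [mem_sigma, mem_powersetCard_univ]
    exact ⟨by rw [card_insert_of_notMem hx, hA], mem_insert_self _ _⟩
  · rintro ⟨B, x⟩ hp
    rw [mem_sigma, mem_powersetCard_univ] at hp
    obtain ⟨hB, hx⟩ := hp
    rw [mem_sigma, mem_powersetCard_univ]
    refine ⟨by rw [card_erase_of_mem hx]; omega, ?_⟩
    rw [mem_compl]
    exact notMem_erase _ _
  · rintro ⟨A, x⟩ hp
    rw [mem_sigma, mem_powersetCard_univ] at hp
    have hx : x ∉ A := mem_compl.mp hp.2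
    rw [erase_insert hx]
  · rintro ⟨B, x⟩ hp
    rw [mem_sigma, mem_powersetCard_univ] at hp
    rw [insert_erase hp.2]
  · rintro ⟨A, x⟩ hp
    rw [mem_sigma, mem_powersetCard_univ] at hp
    have hx : x ∉ A := mem_compl.mp hp.2
    simp only
    rw [erase_insert hx]

/-- The main counting lemma. -/
lemma main_count [Fintype α] (P : Finset (Finset α)) (d δ k : ℕ)
    (hVC : ∀ Y : Finset α, P.Shatters Y → Y.card ≤ d)
    (hsep : ∀ R ∈ P, ∀ S ∈ P, R ≠ S → δ ≤ (symmDiff R S).card)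
    (hδ : 1 ≤ δ) (hkn : k + 1 ≤ Fintype.card α)
    (hm : 4 * d * Fintype.card α ≤ (k+1) * δ) :
    P.card ≤ 2 * ((d+1) * (k+1)^d) := by
  classical
  set n := Fintype.card α with hn
  set s := P.card with hs
  set Φ := (d+1) * (k+1)^d with hΦ
  set f : Finset α → α → ℕ := fun A x => ∑ t ∈ A.powerset,
    min (W P (insert x A) t) (W P (insert x A) (insert x t)) with hf
  -- step 1 : per-A inequality
  have step1 : ∀ A ∈ powersetCard k (univ : Finset α),
      δ * s ≤ δ * Φ + 2 * ∑ x ∈ Aᶜ, f A x := by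
    intro A hA
    have hAcard : A.card = k := (mem_powersetCard_univ.mp hA)
    have h1 := claimI P δ hsep A
    have h2 : (P.image (· ∩ A)).card ≤ Φ := by
      have := trace_card_le P d A hVC
      rwa [hAcard] at this
    calc δ * s ≤ δ * (P.image (· ∩ A)).card + 2 * ∑ x ∈ Aᶜ, f A x := by
          have : ∑ x ∈ Aᶜ, f A x = ∑ x ∈ Aᶜ, ∑ t ∈ A.powerset,
              min (W P (insert x A) t) (W P (insert x A) (insert x t)) := rfl
          rw [this]; exact h1
      _ ≤ δ * Φ + 2 * ∑ x ∈ Aᶜ, f A x := by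
          exact Nat.add_le_add_right (Nat.mul_le_mul_left _ h2) _
  -- sum over A
  have hN1 : (powersetCard k (univ : Finset α)).card = n.choose k := by
    rw [card_powersetCard, card_univ]
  have hN2 : (powersetCard (k+1) (univ : Finset α)).card = n.choose (k+1) := by
    rw [card_powersetCard, card_univ]
  set N1 := n.choose k with hN1def
  set N2 := n.choose (k+1) with hN2def
  have step2 : N1 * (δ * s) ≤ N1 * (δ * Φ)
      + 2 * ∑ A ∈ powersetCard k (univ : Finset α), ∑ x ∈ Aᶜ, f A x := by
    calc N1 * (δ * s) = ∑ _A ∈ powersetCard k (univ : Finset α), δ * s := by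
          rw [sum_const, smul_eq_mul, hN1]
      _ ≤ ∑ A ∈ powersetCard k (univ : Finset α), (δ * Φ + 2 * ∑ x ∈ Aᶜ, f A x) :=
          sum_le_sum step1
      _ = N1 * (δ * Φ) + 2 * ∑ A ∈ powersetCard k (univ : Finset α), ∑ x ∈ Aᶜ, f A x := by
          rw [sum_add_distrib, sum_const, smul_eq_mul, hN1, ← mul_sum]
  -- step 3 : the B-side bound
  have step3 : ∑ B ∈ powersetCard (k+1) (univ : Finset α), ∑ x ∈ B, f (B.erase x) x
      ≤ N2 * (d * s) := by
    have hperB : ∀ B ∈ powersetCard (k+1) (univ : Finset α),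
        ∑ x ∈ B, f (B.erase x) x ≤ d * s := by
      intro B _
      have : ∑ x ∈ B, f (B.erase x) x
          = ∑ x ∈ B, ∑ u ∈ (B.erase x).powerset, min (W P B u) (W P B (insert x u)) := by
        apply sum_congr rfl
        intro x hx
        rw [hf]
        simp only
        rw [insert_erase hx]
      rw [this]
      exact claimII P d hVC B
    calc ∑ B ∈ powersetCard (k+1) (univ : Finset α), ∑ x ∈ B, f (B.erase x) x
        ≤ ∑ _B ∈ powersetCard (k+1) (univ : Finset α), d * s := sum_le_sum hperB
      _ = N2 * (d * s) := by rw [sum_const, smul_eq_mul, hN2]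
  have step4 : N1 * (δ * s) ≤ N1 * (δ * Φ) + 2 * (N2 * (d * s)) := by
    have := claimIII (α := α) f k
    calc N1 * (δ * s)
        ≤ N1 * (δ * Φ) + 2 * ∑ A ∈ powersetCard k (univ : Finset α), ∑ x ∈ Aᶜ, f A x :=
          step2
      _ = N1 * (δ * Φ)
          + 2 * ∑ B ∈ powersetCard (k+1) (univ : Finset α), ∑ x ∈ B, f (B.erase x) x := by
          rw [this]
      _ ≤ N1 * (δ * Φ) + 2 * (N2 * (d * s)) :=
          Nat.add_le_add_left (Nat.mul_le_mul_left _ step3) _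
  -- eliminate the binomial coefficients
  have hN1pos : 0 < N1 := Nat.choose_pos (by omega)
  have hchoose : N2 * (k+1) = N1 * (n - k) := Nat.choose_succ_right_eq n k
  have step5 : (k+1) * (δ * s) ≤ (k+1) * (δ * Φ) + (n - k) * (2 * (d * s)) := by
    have H : N1 * ((k+1) * (δ * s)) ≤ N1 * ((k+1) * (δ * Φ) + (n - k) * (2 * (d * s))) := by
      calc N1 * ((k+1) * (δ * s)) = (k+1) * (N1 * (δ * s)) := by ring
        _ ≤ (k+1) * (N1 * (δ * Φ) + 2 * (N2 * (d * s))) := Nat.mul_le_mul_left _ step4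
        _ = (k+1) * (N1 * (δ * Φ)) + (N2 * (k+1)) * (2 * (d * s)) := by ring
        _ = (k+1) * (N1 * (δ * Φ)) + (N1 * (n - k)) * (2 * (d * s)) := by rw [hchoose]
        _ = N1 * ((k+1) * (δ * Φ) + (n - k) * (2 * (d * s))) := by ring
    exact Nat.le_of_mul_le_mul_left H hN1pos
  have step6 : (k+1) * (δ * s) ≤ (k+1) * (δ * Φ) + 2 * (d * (n * s)) := by
    calc (k+1) * (δ * s) ≤ (k+1) * (δ * Φ) + (n - k) * (2 * (d * s)) := step5
      _ ≤ (k+1) * (δ * Φ) + n * (2 * (d * s)) :=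
          Nat.add_le_add_left (Nat.mul_le_mul_right _ (Nat.sub_le n k)) _
      _ = (k+1) * (δ * Φ) + 2 * (d * (n * s)) := by ring
  have step7 : 4 * (d * (n * s)) ≤ (k+1) * (δ * s) := by
    calc 4 * (d * (n * s)) = (4 * d * n) * s := by ring
      _ ≤ ((k+1) * δ) * s := Nat.mul_le_mul_right _ hm
      _ = (k+1) * (δ * s) := by ring
  have step8 : (k+1) * (δ * s) ≤ (k+1) * (δ * (2 * Φ)) := by
    have h1 : 2 * ((k+1) * (δ * s)) ≤ 2 * ((k+1) * (δ * Φ)) + (k+1) * (δ * s) := by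
      calc 2 * ((k+1) * (δ * s))
          ≤ 2 * ((k+1) * (δ * Φ) + 2 * (d * (n * s))) := Nat.mul_le_mul_left _ step6
        _ = 2 * ((k+1) * (δ * Φ)) + 4 * (d * (n * s)) := by ring
        _ ≤ 2 * ((k+1) * (δ * Φ)) + (k+1) * (δ * s) := Nat.add_le_add_left step7 _
    have h2 : (k+1) * (δ * s) ≤ 2 * ((k+1) * (δ * Φ)) := by omega
    calc (k+1) * (δ * s) ≤ 2 * ((k+1) * (δ * Φ)) := h2
      _ = (k+1) * (δ * (2 * Φ)) := by ring
  have : δ * s ≤ δ * (2 * Φ) := Nat.le_of_mul_le_mul_left step8 (Nat.succ_pos k)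
  exact Nat.le_of_mul_le_mul_left this (by omega)

end HausslerPack

open Finset in
/-- Haussler's packing lemma: a δ-separated set system of VC-dimension at most `d`
on `n` elements has at most `C * (n/δ)^d` sets, where `C` depends only on `d`. -/
theorem packing_lemma (d : ℕ) :
    ∃ C : ℝ, 0 < C ∧
      ∀ (α : Type) [Fintype α] [DecidableEq α] (P : Finset (Finset α)) (δ : ℕ),
        (∀ Y : Finset α, (∀ Z ⊆ Y, ∃ S ∈ P, S ∩ Y = Z) → Y.card ≤ d) →
        1 ≤ δ → δ ≤ Fintype.card α →
        (∀ R ∈ P, ∀ S ∈ P, R ≠ S → δ ≤ (symmDiff R S).card) →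
        (P.card : ℝ) ≤ C * ((Fintype.card α : ℝ) / (δ : ℝ)) ^ d := by
  classical
  refine ⟨2 * (d+1) * ((8*(d+1) : ℝ))^d, by positivity, ?_⟩
  intro α _ _ P δ hVC0 hδ1 hδn hsep
  set n := Fintype.card α with hn
  have hVC : ∀ Y : Finset α, P.Shatters Y → Y.card ≤ d := by
    intro Y hY
    apply hVC0
    intro Z hZ
    obtain ⟨u, hu, huZ⟩ := hY hZ
    exact ⟨u, hu, by rw [inter_comm]; exact huZ⟩
  have hn1 : 1 ≤ n := le_trans hδ1 hδn
  have hδpos : (0:ℝ) < δ := by exact_mod_cast hδ1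
  set r : ℝ := (n : ℝ) / δ with hr
  have hr1 : 1 ≤ r := by
    rw [hr, le_div_iff₀ hδpos, one_mul]
    exact_mod_cast hδn
  have hr0 : 0 ≤ r := le_trans zero_le_one hr1
  have hd0 : (0:ℝ) ≤ (d:ℝ) := Nat.cast_nonneg d
  by_cases hcase : 4*d + 1 ≤ δ
  · -- main case
    set k := 4*d*n/δ with hk
    have hδpos' : 0 < δ := hδ1
    have hkn : k + 1 ≤ n := by
      have h1 : 4*d*n < n*δ := by
        calc 4*d*n = n*(4*d) := by ring
          _ < n*δ := mul_lt_mul_of_pos_left (by omega) (by omega)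
      have : k < n := (Nat.div_lt_iff_lt_mul hδpos').mpr h1
      omega
    have hm : 4*d*n ≤ (k+1)*δ := by
      have h2 : 4*d*n % δ < δ := Nat.mod_lt _ hδpos'
      calc 4*d*n = δ * k + 4*d*n % δ := (Nat.div_add_mod _ _).symm
        _ ≤ δ * k + δ := Nat.add_le_add_left (le_of_lt h2) _
        _ = (k+1) * δ := by ring
    have hmain := HausslerPack.main_count P d δ k hVC hsep hδ1 hkn hm
    have hkr : (k:ℝ) ≤ 4*d*r := by
      calc (k:ℝ) = ((4*d*n/δ : ℕ):ℝ) := by rw [hk]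
        _ ≤ ((4*d*n : ℕ):ℝ)/(δ:ℝ) := Nat.cast_div_le
        _ = 4*d*r := by push_cast; rw [hr]; ring
    have hkr2 : (k:ℝ) + 1 ≤ 8*(d+1)*r := by nlinarith
    have hcast : (P.card : ℝ) ≤ 2 * ((d:ℝ)+1) * ((k:ℝ)+1)^d := by
      have := hmain
      have hc : (P.card : ℝ) ≤ ((2 * ((d+1) * (k+1)^d) : ℕ) : ℝ) := by exact_mod_cast this
      calc (P.card : ℝ) ≤ ((2 * ((d+1) * (k+1)^d) : ℕ) : ℝ) := hc
        _ = 2 * ((d:ℝ)+1) * ((k:ℝ)+1)^d := by push_cast; ring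
    calc (P.card : ℝ) ≤ 2 * ((d:ℝ)+1) * ((k:ℝ)+1)^d := hcast
      _ ≤ 2 * ((d:ℝ)+1) * (8*((d:ℝ)+1)*r)^d := by
          gcongr
      _ = 2 * ((d:ℝ)+1) * (8*((d:ℝ)+1))^d * r^d := by rw [mul_pow]; ring
      _ = 2 * (d+1) * ((8*(d+1) : ℝ))^d * r^d := by push_cast; ring
  · -- small δ case : Sauer–Shelah suffices
    push_neg at hcase
    have hδ4d : (δ:ℝ) ≤ 4*d := by exact_mod_cast (by omega : δ ≤ 4*d)
    have hsauer : P.card ≤ (d+1) * (n+1)^d := by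
      have := HausslerPack.trace_card_le P d univ hVC
      rwa [show P.image (· ∩ univ) = P by
          rw [show (fun R : Finset α => R ∩ univ) = id by funext R; simp, image_id],
        card_univ] at this
    have hnr : (n:ℝ) = δ * r := by
      rw [hr]; field_simp
    have hnb : (n:ℝ) + 1 ≤ 8*((d:ℝ)+1)*r := by nlinarith [hn1, (by exact_mod_cast hn1 : (1:ℝ) ≤ (n:ℝ))]
    have hcast : (P.card : ℝ) ≤ ((d:ℝ)+1) * ((n:ℝ)+1)^d := by
      have hc : (P.card : ℝ) ≤ (((d+1) * (n+1)^d : ℕ) : ℝ) := by exact_mod_cast hsauer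
      calc (P.card : ℝ) ≤ (((d+1) * (n+1)^d : ℕ) : ℝ) := hc
        _ = ((d:ℝ)+1) * ((n:ℝ)+1)^d := by push_cast; ring
    calc (P.card : ℝ) ≤ ((d:ℝ)+1) * ((n:ℝ)+1)^d := hcast
      _ ≤ ((d:ℝ)+1) * (8*((d:ℝ)+1)*r)^d := by
          gcongr
      _ ≤ 2 * (((d:ℝ)+1) * (8*((d:ℝ)+1)*r)^d) := by nlinarith [pow_nonneg (by positivity : (0:ℝ) ≤ 8*((d:ℝ)+1)*r) d, hd0]
      _ = 2 * ((d:ℝ)+1) * (8*((d:ℝ)+1))^d * r^d := by rw [mul_pow]; ring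
      _ = 2 * (d+1) * ((8*(d+1) : ℝ))^d * r^d := by push_cast; ring
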